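/- Let μ, λ > 0 with μλ ≤ 1, let β₁, β₂ ∈ [0,1), and let α > 0. For δ ∈ ℝ define A'(δ) = [[1 + β₁ + δ(1 + β₂), −(β₁ + δβ₂)],[1, 0]] ∈ ℝ^{2×2} and M'(δ) = [[−(2αδ + λα² + μδ²), −(α + μδ)],[−(α + μδ), −μ]] ∈ ℝ^{2×2}. Then there exists δ ∈ ℝ such that all three of the following hold — (1) det(e^{iω}I − A'(δ)) ≠ 0 for all ω ∈ ℝ, (2) A'(δ) is Schur stable, (3) the (1,1) entry of M'(δ) is nonnegative — if and only if α < 2(1 + β₁)(1 + √(1 − μλ)) / (λ(1 + 2β₂)). -/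

import Mathlib

open Matrix

lemma mem_spectrum_iff_det' (M : Matrix (Fin 2) (Fin 2) ℂ) (z : ℂ) :
    z ∈ spectrum ℂ M ↔ det (z • (1 : Matrix (Fin 2) (Fin 2) ℂ) - M) = 0 := by
  rw [spectrum.mem_iff, Algebra.algebraMap_eq_smul_one]
  constructor
  · intro h
    by_contra hd
    exact h ((Matrix.isUnit_iff_isUnit_det _).mpr (isUnit_iff_ne_zero.mpr hd))
  · intro h hu
    exact (isUnit_iff_ne_zero.mp ((Matrix.isUnit_iff_isUnit_det _).mp hu)) h

lemma jury_schur' (t d : ℝ) (hd1 : d < 1) (h2 : 0 < 1 + t + d)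
    (h3 : 0 < 1 - t + d) (z : ℂ) (hz : z^2 - (t:ℂ)*z + (d:ℂ) = 0) : ‖z‖ < 1 := by
  rw [Complex.ext_iff] at hz
  obtain ⟨hre, him⟩ := hz
  simp [pow_two, Complex.mul_re, Complex.mul_im] at hre him
  have him' : z.im * (2*z.re - t) = 0 := by linarith [him]
  have key : z.re^2 + z.im^2 < 1 := by
    rcases mul_eq_zero.mp him' with hy0 | hxt
    · rw [hy0]
      have hre' : z.re^2 - t*z.re + d = 0 := by rw [hy0] at hre; nlinarith [hre]
      rcases le_or_gt z.re (-1) with hc | hc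
      · nlinarith [hre', mul_nonneg (by linarith : (0:ℝ) ≤ -1 - z.re) (by linarith : (0:ℝ) ≤ 1 - t + d)]
      · rcases le_or_gt 1 z.re with hc2 | hc2
        · nlinarith [hre', mul_nonneg (by linarith : (0:ℝ) ≤ z.re - 1) (by linarith : (0:ℝ) ≤ 1 - t + d)]
        · nlinarith
    · have ht : t = 2*z.re := by linarith
      rw [ht] at hre
      nlinarith [hre]
  have hn : ‖z‖^2 = z.re^2 + z.im^2 := by
    rw [Complex.sq_norm, Complex.normSq_apply]; ring
  nlinarith [norm_nonneg z, hn, key]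

/-- The shifted system matrix `A'(δ)` of the general accelerated gradient method. -/
noncomputable def Ashift (β₁ β₂ δ : ℝ) : Matrix (Fin 2) (Fin 2) ℝ :=
  !![1 + β₁ + δ * (1 + β₂), -(β₁ + δ * β₂); 1, 0]

/-- The shifted multiplier matrix `M'(δ)`. -/
noncomputable def Mshift (μ lam α δ : ℝ) : Matrix (Fin 2) (Fin 2) ℝ :=
  !![-(2 * α * δ + lam * α ^ 2 + μ * δ ^ 2), -(α + μ * δ);
     -(α + μ * δ), -μ]

lemma det_smul_one_sub_Ashift' (β₁ β₂ δ : ℝ) (z : ℂ) :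
    det (z • (1 : Matrix (Fin 2) (Fin 2) ℂ) - (Ashift β₁ β₂ δ).map (algebraMap ℝ ℂ)) =
      z^2 - ((1 + β₁ + δ * (1 + β₂) : ℝ) : ℂ) * z + ((β₁ + δ * β₂ : ℝ) : ℂ) := by
  simp [Ashift, Matrix.det_fin_two, Matrix.map_apply, Matrix.smul_apply, Matrix.sub_apply,
    Matrix.one_apply]
  ring

lemma Mshift_00 (μ lam α δ : ℝ) :
    Mshift μ lam α δ 0 0 = -(2 * α * δ + lam * α ^ 2 + μ * δ ^ 2) := by
  simp [Mshift]

set_option maxHeartbeats 1000000 in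
/-- Existence of a slack variable `δ` making the KYP Conditions hold is
equivalent to the step-size bound `α < 2(1+β₁)(1+√(1-μλ))/(λ(1+2β₂))`. -/
theorem kyp_conditions_iff_stepsize_bound
    (μ lam β₁ β₂ α : ℝ) (hμ : 0 < μ) (hlam : 0 < lam) (hμlam : μ * lam ≤ 1)
    (hβ₁ : β₁ ∈ Set.Ico (0 : ℝ) 1) (hβ₂ : β₂ ∈ Set.Ico (0 : ℝ) 1) (hα : 0 < α) :
    (∃ δ : ℝ,
      (∀ ω : ℝ, det (Complex.exp (ω * Complex.I) • (1 : Matrix (Fin 2) (Fin 2) ℂ) -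
        (Ashift β₁ β₂ δ).map (algebraMap ℝ ℂ)) ≠ 0) ∧
      (∀ z ∈ spectrum ℂ ((Ashift β₁ β₂ δ).map (algebraMap ℝ ℂ)), ‖z‖ < 1) ∧
      0 ≤ Mshift μ lam α δ 0 0)
    ↔ α < 2 * (1 + β₁) * (1 + Real.sqrt (1 - μ * lam)) / (lam * (1 + 2 * β₂)) := by
  obtain ⟨hβ₁0, hβ₁1⟩ := hβ₁
  obtain ⟨hβ₂0, hβ₂1⟩ := hβ₂
  set s : ℝ := Real.sqrt (1 - μ * lam) with hs
  have hs0 : 0 ≤ s := Real.sqrt_nonneg _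
  have hs2 : s^2 = 1 - μ * lam := Real.sq_sqrt (by linarith)
  have hs1 : s < 1 := by nlinarith [mul_pos hμ hlam]
  have hden : 0 < lam * (1 + 2 * β₂) := by positivity
  constructor
  · rintro ⟨δ, hdet, hspec, hM⟩
    rw [Mshift_00] at hM
    have hM' : 2*α*δ + lam*α^2 + μ*δ^2 ≤ 0 := by linarith
    -- Step A : μδ + α ≤ αs
    have hsq : (μ*δ + α)^2 ≤ (α*s)^2 := by
      nlinarith [mul_nonpos_of_nonneg_of_nonpos hμ.le hM', hs2]
    have hstep : μ*δ + α ≤ α*s := by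
      calc μ*δ + α ≤ |μ*δ + α| := le_abs_self _
        _ = Real.sqrt ((μ*δ + α)^2) := (Real.sqrt_sq_eq_abs _).symm
        _ ≤ Real.sqrt ((α*s)^2) := Real.sqrt_le_sqrt hsq
        _ = |α*s| := Real.sqrt_sq_eq_abs _
        _ = α*s := abs_of_nonneg (mul_nonneg hα.le hs0)
    -- Step B : 2(1+β₁) + δ(1+2β₂) > 0
    have hJ : 0 < 2*(1+β₁) + δ*(1+2*β₂) := by
      by_contra hc
      push_neg at hc
      set t : ℝ := 1 + β₁ + δ * (1 + β₂) with ht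
      set d : ℝ := β₁ + δ * β₂ with hd
      have hc' : 1 + t + d ≤ 0 := by rw [ht, hd]; linarith
      have hD : 0 ≤ t^2 - 4*d := by nlinarith [sq_nonneg (t+2)]
      set q : ℝ := Real.sqrt (t^2 - 4*d) with hq
      have hq2 : q^2 = t^2 - 4*d := Real.sq_sqrt hD
      have hqge : t + 2 ≤ q := by
        calc t + 2 ≤ |t + 2| := le_abs_self _
          _ = Real.sqrt ((t+2)^2) := (Real.sqrt_sq_eq_abs _).symm
          _ ≤ Real.sqrt (t^2 - 4*d) := Real.sqrt_le_sqrt (by nlinarith)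
      set r : ℝ := (t - q)/2 with hr
      have hroot : r^2 - t*r + d = 0 := by rw [hr]; linear_combination hq2/4
      have hmem : ((r:ℂ)) ∈ spectrum ℂ ((Ashift β₁ β₂ δ).map (algebraMap ℝ ℂ)) := by
        rw [mem_spectrum_iff_det', det_smul_one_sub_Ashift', ← ht, ← hd]
        exact_mod_cast hroot
      have hlt := hspec _ hmem
      rw [Complex.norm_real, Real.norm_eq_abs] at hlt
      have hrle : r ≤ -1 := by rw [hr]; linarith
      have : (1:ℝ) ≤ |r| := by rw [abs_of_nonpos (by linarith)]; linarith
      linarith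
    -- conclude
    rw [lt_div_iff₀ hden]
    have k1 : (α - α*s)*(1+2*β₂) < 2*μ*(1+β₁) := by
      nlinarith [mul_pos hμ hJ, mul_le_mul_of_nonneg_right hstep (by linarith : (0:ℝ) ≤ 1+2*β₂)]
    have h1s : (0:ℝ) < 1 + s := by linarith
    have k2 : (α - α*s)*(1+2*β₂)*(1+s) < 2*μ*(1+β₁)*(1+s) :=
      mul_lt_mul_of_pos_right k1 h1s
    have e1 : (α - α*s)*(1+2*β₂)*(1+s) = μ*(α * (lam * (1 + 2*β₂))) := by
      linear_combination (-(α*(1+2*β₂))) * hs2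
    have e2 : 2*μ*(1+β₁)*(1+s) = μ*(2*(1+β₁)*(1+s)) := by ring
    rw [e1, e2] at k2
    exact lt_of_mul_lt_mul_left k2 hμ.le
  · intro hbound
    rw [lt_div_iff₀ hden] at hbound
    refine ⟨α*(s-1)/μ, ?_⟩
    set δ : ℝ := α*(s-1)/μ with hδ
    have hmd : μ * δ = α*(s-1) := by rw [hδ]; field_simp
    have hδneg : δ < 0 := by
      have hμδ : μ * δ < 0 := by rw [hmd]; nlinarith
      nlinarith
    -- M entry is zero
    have hM0 : 2*α*δ + lam*α^2 + μ*δ^2 = 0 := by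
      have h1 : μ * (2*α*δ + lam*α^2 + μ*δ^2) = 0 := by
        linear_combination (μ*δ + α*(s-1) + 2*α) * hmd + α^2 * hs2
      rcases mul_eq_zero.mp h1 with h | h
      · exact absurd h hμ.ne'
      · exact h
    -- Jury bound hJ
    have h1s : (0:ℝ) < 1 + s := by linarith
    have key : α*(1-s)*(1+2*β₂) < 2*μ*(1+β₁) := by
      have h2 : μ*(α * (lam * (1 + 2*β₂))) < μ*(2*(1+β₁)*(1+s)) :=
        mul_lt_mul_of_pos_left hbound hμ
      have e1 : α*(1-s)*(1+2*β₂)*(1+s) = μ*(α * (lam * (1 + 2*β₂))) := by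
        linear_combination (-(α*(1+2*β₂))) * hs2
      have e2 : μ*(2*(1+β₁)*(1+s)) = (2*μ*(1+β₁))*(1+s) := by ring
      rw [← e1, e2] at h2
      exact lt_of_mul_lt_mul_right h2 h1s.le
    have hJ : 0 < 2*(1+β₁) + δ*(1+2*β₂) := by
      have hmd2 : μ*(δ*(1+2*β₂)) = α*(s-1)*(1+2*β₂) := by linear_combination (1+2*β₂)*hmd
      have h4 : 0 < μ*(2*(1+β₁) + δ*(1+2*β₂)) := by nlinarith [key, hmd2]
      nlinarith [h4, hμ]
    have hd1 : β₁ + δ*β₂ < 1 := by nlinarith [mul_nonpos_of_nonpos_of_nonneg hδneg.le hβ₂0]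
    have h2 : 0 < 1 + (1 + β₁ + δ * (1 + β₂)) + (β₁ + δ * β₂) := by
      rw [show 1 + (1 + β₁ + δ * (1 + β₂)) + (β₁ + δ * β₂) = 2*(1+β₁) + δ*(1+2*β₂) from by ring]
      exact hJ
    have h3 : 0 < 1 - (1 + β₁ + δ * (1 + β₂)) + (β₁ + δ * β₂) := by
      rw [show 1 - (1 + β₁ + δ * (1 + β₂)) + (β₁ + δ * β₂) = -δ from by ring]
      linarith
    have hschur : ∀ z ∈ spectrum ℂ ((Ashift β₁ β₂ δ).map (algebraMap ℝ ℂ)), ‖z‖ < 1 := by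
      intro z hz
      rw [mem_spectrum_iff_det', det_smul_one_sub_Ashift'] at hz
      exact jury_schur' _ _ hd1 h2 h3 z hz
    refine ⟨?_, hschur, ?_⟩
    · intro ω hdet0
      have hmem : Complex.exp (ω * Complex.I) ∈ spectrum ℂ ((Ashift β₁ β₂ δ).map (algebraMap ℝ ℂ)) :=
        (mem_spectrum_iff_det' _ _).mpr hdet0
      have h1 := hschur _ hmem
      rw [Complex.norm_exp_ofReal_mul_I] at h1
      exact absurd h1 (lt_irrefl 1)
    · rw [Mshift_00, hM0]
      norm_num
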